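/- Let H be an n×n Hermitian matrix, ρ an n×n density matrix, and let W : ℝ² → ℝ be measurable with ∫∫ |W(E,t)| (1 + |E|) dE dt < ∞ and ∫∫ W(E,t) dE dt = 1. Define m = ∫∫ E W(E,t) dE dt, λ(s) = ∫∫ e^{iEs} W(E,t) dE dt, and the matrix-valued function N(s) = ∫∫ e^{iEs} W(E,t) e^{−iHt} ρ e^{iHt} dE dt, and set ξ(s) = N(s)/λ(s) on a neighborhood of 0 where λ ≠ 0 (note λ(0) = 1). Then ξ is differentiable at 0 with ξ′(0) = i ∫∫ (E − m) W(E,t) e^{−iHt} ρ e^{iHt} dE dt. Consequently, for any Hermitian matrix W_S, −i Tr[W_S ξ′(0)] = ∫∫ (E − m) W(E,t) Tr[W_S e^{−iHt} ρ e^{iHt}] dE dt, which is the F-term of Theorem 1. -/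

import Mathlib

open Matrix NormedSpace MeasureTheory
open scoped ComplexOrder

attribute [local instance] Matrix.normedAddCommGroup Matrix.normedSpace

namespace Stmt19Aux

variable {n : ℕ}

noncomputable instance matPMS : TopologicalSpace.PseudoMetrizableSpace (Matrix (Fin n) (Fin n) ℂ) :=
  PseudoEMetricSpace.pseudoMetrizableSpace

noncomputable instance matCENorm : ContinuousENorm (Matrix (Fin n) (Fin n) ℂ) :=
  SeminormedAddGroup.toContinuousENorm

noncomputable def Mt (H ρ : Matrix (Fin n) (Fin n) ℂ) (t : ℝ) : Matrix (Fin n) (Fin n) ℂ :=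
  NormedSpace.exp ((-(Complex.I * (t : ℂ))) • H) * ρ *
    NormedSpace.exp ((Complex.I * (t : ℂ)) • H)

lemma expU_conjTranspose (H : Matrix (Fin n) (Fin n) ℂ) (hH : H.IsHermitian) (t : ℝ) :
    (NormedSpace.exp ((-(Complex.I * (t : ℂ))) • H))ᴴ
      = NormedSpace.exp ((Complex.I * (t : ℂ)) • H) := by
  rw [← Matrix.exp_conjTranspose, Matrix.conjTranspose_smul, hH.eq]
  congr 1
  simp [Complex.ext_iff]

lemma expU_mul (H : Matrix (Fin n) (Fin n) ℂ) (t : ℝ) :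
    NormedSpace.exp ((-(Complex.I * (t : ℂ))) • H) *
      NormedSpace.exp ((Complex.I * (t : ℂ)) • H) = 1 := by
  rw [← Matrix.exp_add_of_commute]
  · rw [neg_smul, neg_add_cancel, NormedSpace.exp_zero]
  · exact ((Commute.refl H).smul_left _).smul_right _

lemma entry_norm_le_one {U : Matrix (Fin n) (Fin n) ℂ} (h : U * Uᴴ = 1) (i j : Fin n) :
    ‖U i j‖ ≤ 1 := by
  have h2 : ∑ k, Complex.normSq (U i k) = 1 := by
    have h1 := congrFun (congrFun h i) i
    simp only [Matrix.mul_apply, Matrix.conjTranspose_apply, Matrix.one_apply_eq] at h1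
    have : ((∑ k, Complex.normSq (U i k) : ℝ) : ℂ) = 1 := by
      push_cast
      rw [← h1]
      congr 1
      ext k
      rw [← Complex.mul_conj]
      rfl
    exact_mod_cast this
  have h3 : Complex.normSq (U i j) ≤ 1 :=
    h2 ▸ Finset.single_le_sum (fun k _ => Complex.normSq_nonneg _) (Finset.mem_univ j)
  have h4 : ‖U i j‖ ^ 2 ≤ 1 := by rwa [Complex.sq_norm]
  nlinarith [norm_nonneg (U i j)]

lemma Mt_norm_le (H ρ : Matrix (Fin n) (Fin n) ℂ) (hH : H.IsHermitian) (t : ℝ) :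
    ‖Mt H ρ t‖ ≤ (n : ℝ)^2 * ‖ρ‖ := by
  have hU : ∀ (a b : Fin n),
      ‖NormedSpace.exp ((-(Complex.I * (t : ℂ))) • H) a b‖ ≤ 1 := by
    refine entry_norm_le_one ?_
    rw [expU_conjTranspose H hH t]
    exact expU_mul H t
  unfold Mt
  set U := NormedSpace.exp ((-(Complex.I * (t : ℂ))) • H) with hUdef
  rw [← expU_conjTranspose H hH t]
  rw [Matrix.norm_le_iff (by positivity)]
  intro i j
  have hUH : ∀ a b, ‖Uᴴ a b‖ ≤ 1 := by
    intro a b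
    rw [Matrix.conjTranspose_apply, norm_star]
    exact hU b a
  have step1 : ∀ k, ‖(U * ρ) i k‖ ≤ (n : ℝ) * ‖ρ‖ := by
    intro k
    rw [Matrix.mul_apply]
    calc ‖∑ l, U i l * ρ l k‖ ≤ ∑ l, ‖U i l * ρ l k‖ := norm_sum_le _ _
      _ ≤ ∑ _l : Fin n, ‖ρ‖ := by
          refine Finset.sum_le_sum fun l _ => ?_
          rw [norm_mul]
          calc ‖U i l‖ * ‖ρ l k‖ ≤ 1 * ‖ρ‖ :=
                mul_le_mul (hU i l) (Matrix.norm_entry_le_entrywise_sup_norm ρ)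
                  (norm_nonneg _) zero_le_one
            _ = ‖ρ‖ := one_mul _
      _ = (n : ℝ) * ‖ρ‖ := by simp [Finset.sum_const, Finset.card_univ]
  calc ‖(U * ρ * Uᴴ) i j‖ = ‖∑ k, (U * ρ) i k * Uᴴ k j‖ := by rw [Matrix.mul_apply]
    _ ≤ ∑ k, ‖(U * ρ) i k * Uᴴ k j‖ := norm_sum_le _ _
    _ ≤ ∑ _k : Fin n, (n : ℝ) * ‖ρ‖ := by
        refine Finset.sum_le_sum fun k _ => ?_
        rw [norm_mul]
        calc ‖(U * ρ) i k‖ * ‖Uᴴ k j‖ ≤ ((n : ℝ) * ‖ρ‖) * 1 :=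
              mul_le_mul (step1 k) (hUH k j) (norm_nonneg _) (by positivity)
          _ = (n : ℝ) * ‖ρ‖ := mul_one _
    _ = (n : ℝ)^2 * ‖ρ‖ := by
        simp [Finset.sum_const, Finset.card_univ]; ring

lemma exp_cont : Continuous (fun A : Matrix (Fin n) (Fin n) ℂ => NormedSpace.exp A) := by
  letI : SeminormedRing (Matrix (Fin n) (Fin n) ℂ) := Matrix.linftyOpSemiNormedRing
  letI : NormedRing (Matrix (Fin n) (Fin n) ℂ) := Matrix.linftyOpNormedRing
  letI : NormedAlgebra ℂ (Matrix (Fin n) (Fin n) ℂ) := Matrix.linftyOpNormedAlgebra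
  letI : NormedAlgebra ℚ (Matrix (Fin n) (Fin n) ℂ) := Matrix.linftyOpNormedAlgebra
  exact @NormedSpace.exp_continuous _ _ _ (FiniteDimensional.complete ℂ _)

lemma Mt_cont (H ρ : Matrix (Fin n) (Fin n) ℂ) : Continuous (Mt H ρ) := by
  have c1 : Continuous (fun t : ℝ => NormedSpace.exp ((-(Complex.I * (t : ℂ))) • H)) :=
    exp_cont.comp ((Continuous.neg (continuous_const.mul Complex.continuous_ofReal)).smul
      continuous_const)
  have c2 : Continuous (fun t : ℝ => NormedSpace.exp ((Complex.I * (t : ℂ)) • H)) :=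
    exp_cont.comp ((continuous_const.mul Complex.continuous_ofReal).smul continuous_const)
  exact (c1.matrix_mul continuous_const).matrix_mul c2

lemma norm_exp_I_mul (E s : ℝ) : ‖Complex.exp (Complex.I * (E : ℂ) * (s : ℂ))‖ = 1 := by
  rw [Complex.norm_exp]
  have : (Complex.I * (E : ℂ) * (s : ℂ)).re = 0 := by
    simp [Complex.mul_re, Complex.mul_im]
  rw [this, Real.exp_zero]

lemma hasDerivAt_scalar (E w : ℝ) (s : ℝ) :
    HasDerivAt (fun s : ℝ => Complex.exp (Complex.I * (E : ℂ) * (s : ℂ)) * (w : ℂ))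
      ((Complex.I * (E : ℂ)) * Complex.exp (Complex.I * (E : ℂ) * (s : ℂ)) * (w : ℂ)) s := by
  have h1 : HasDerivAt (fun s : ℝ => (Complex.I * (E : ℂ)) * (s : ℂ)) (Complex.I * (E : ℂ)) s := by
    simpa using (Complex.ofRealCLM.hasDerivAt (x := s)).const_mul (Complex.I * (E : ℂ))
  have h2 := (h1.cexp).mul_const (w : ℂ)
  rw [show (Complex.I * (E : ℂ)) * Complex.exp (Complex.I * (E : ℂ) * (s : ℂ)) * (w : ℂ)
    = Complex.exp (Complex.I * (E : ℂ) * (s : ℂ)) * (Complex.I * (E : ℂ)) * (w : ℂ) by ring]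
  exact h2

end Stmt19Aux

open Stmt19Aux

/-- Differentiability of the effective operator `ξ(s) = N(s)/λ(s)` at `s = 0`,
with `ξ′(0) = i ∫∫ (E - m) W(E,t) e^{-iHt} ρ e^{iHt} dE dt`, and the resulting expression
`-i Tr[W_S ξ′(0)] = ∫∫ (E - m) W(E,t) Tr[W_S e^{-iHt} ρ e^{iHt}] dE dt` for the F-term. -/
theorem stmt_19 (n : ℕ) (H ρ : Matrix (Fin n) (Fin n) ℂ)
    (hH : H.IsHermitian) (hρ : ρ.PosSemidef) (hρtr : ρ.trace = 1)
    (W : ℝ × ℝ → ℝ) (hWmeas : Measurable W)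
    (hWint : Integrable (fun q : ℝ × ℝ => |W q| * (1 + |q.1|)))
    (hWnorm : (∫ q : ℝ × ℝ, W q) = 1)
    (m : ℝ) (hm : m = ∫ q : ℝ × ℝ, q.1 * W q)
    (lam : ℝ → ℂ)
    (hlam : lam = fun (s : ℝ) => ∫ q : ℝ × ℝ, Complex.exp (Complex.I * (q.1 : ℂ) * (s : ℂ)) * (W q : ℂ))
    (N : ℝ → Matrix (Fin n) (Fin n) ℂ)
    (hN : N = fun (s : ℝ) => ∫ q : ℝ × ℝ,
        (Complex.exp (Complex.I * (q.1 : ℂ) * (s : ℂ)) * (W q : ℂ)) •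
          (NormedSpace.exp ((-(Complex.I * (q.2 : ℂ))) • H) * ρ *
            NormedSpace.exp ((Complex.I * (q.2 : ℂ)) • H)))
    (ξ : ℝ → Matrix (Fin n) (Fin n) ℂ) (hξ : ξ = fun s => (lam s)⁻¹ • N s)
    (D : Matrix (Fin n) (Fin n) ℂ)
    (hD : D = Complex.I • ∫ q : ℝ × ℝ,
        ((q.1 - m) * W q) •
          (NormedSpace.exp ((-(Complex.I * (q.2 : ℂ))) • H) * ρ *
            NormedSpace.exp ((Complex.I * (q.2 : ℂ)) • H)))
    (WS : Matrix (Fin n) (Fin n) ℂ) (hWS : WS.IsHermitian) :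
    HasDerivAt ξ D 0
    ∧ (-Complex.I) * (WS * D).trace
      = ∫ q : ℝ × ℝ, (((q.1 - m) * W q : ℝ) : ℂ) *
          (WS * (NormedSpace.exp ((-(Complex.I * (q.2 : ℂ))) • H) * ρ *
            NormedSpace.exp ((Complex.I * (q.2 : ℂ)) • H))).trace := by
  classical
  -- Rewrite everything in terms of `Mt H ρ`.
  have hN' : N = fun (s : ℝ) => ∫ q : ℝ × ℝ,
      (Complex.exp (Complex.I * (q.1 : ℂ) * (s : ℂ)) * (W q : ℂ)) • Mt H ρ q.2 := by
    simp only [Mt]; exact hN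
  have hD' : D = Complex.I • ∫ q : ℝ × ℝ, ((q.1 - m) * W q) • Mt H ρ q.2 := by
    simp only [Mt]; exact hD
  set C : ℝ := (n : ℝ)^2 * ‖ρ‖ with hCdef
  have hC : 0 ≤ C := by positivity
  have hMle : ∀ t : ℝ, ‖Mt H ρ t‖ ≤ C := fun t => Mt_norm_le H ρ hH t
  have hMcont : Continuous (Mt H ρ) := Mt_cont H ρ
  have hMq : AEStronglyMeasurable (fun q : ℝ × ℝ => Mt H ρ q.2) volume :=
    (hMcont.comp continuous_snd).aestronglyMeasurable
  have hWC : Measurable fun q : ℝ × ℝ => (W q : ℂ) := Complex.measurable_ofReal.comp hWmeas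
  have hexpmeas : ∀ s : ℝ, Measurable fun q : ℝ × ℝ =>
      Complex.exp (Complex.I * (q.1 : ℂ) * (s : ℂ)) := fun s =>
    (Complex.continuous_exp.comp
      (((continuous_const.mul (Complex.continuous_ofReal.comp continuous_fst)).mul
        continuous_const))).measurable
  -- generic integrability helper
  have key_int : ∀ (c : ℝ × ℝ → ℂ), AEStronglyMeasurable c volume →
      (∀ q : ℝ × ℝ, ‖c q‖ ≤ |W q| * (1 + |q.1|)) →
      Integrable (fun q : ℝ × ℝ => c q • Mt H ρ q.2) := by
    intro c hc hbd
    refine (hWint.const_mul C).mono' (hc.smul hMq) (ae_of_all _ fun q => ?_)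
    rw [norm_smul]
    calc ‖c q‖ * ‖Mt H ρ q.2‖ ≤ (|W q| * (1 + |q.1|)) * C :=
          mul_le_mul (hbd q) (hMle q.2) (norm_nonneg _) (by positivity)
      _ = C * (|W q| * (1 + |q.1|)) := mul_comm _ _
  have habs1 : ∀ q : ℝ × ℝ, |W q| ≤ |W q| * (1 + |q.1|) := fun q => by
    nlinarith [abs_nonneg (W q), abs_nonneg q.1]
  have habs2 : ∀ q : ℝ × ℝ, |q.1| * |W q| ≤ |W q| * (1 + |q.1|) := fun q => by
    nlinarith [abs_nonneg (W q), abs_nonneg q.1]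
  -- derivative of lam at 0
  have hlam_base := hasDerivAt_integral_of_dominated_loc_of_deriv_le (𝕜 := ℝ) (μ := volume)
    (F := fun s (q : ℝ × ℝ) => Complex.exp (Complex.I * (q.1 : ℂ) * (s : ℂ)) * (W q : ℂ))
    (F' := fun s (q : ℝ × ℝ) => (Complex.I * (q.1 : ℂ)) *
      Complex.exp (Complex.I * (q.1 : ℂ) * (s : ℂ)) * (W q : ℂ))
    (x₀ := 0) (s := Metric.ball 0 1) (bound := fun q => |W q| * (1 + |q.1|)) (Metric.ball_mem_nhds 0 one_pos)
    (Filter.Eventually.of_forall fun s =>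
      (((hexpmeas s).mul hWC)).aestronglyMeasurable)
    (by
      refine (hWint.mono' (((hexpmeas 0).mul hWC)).aestronglyMeasurable
        (ae_of_all _ fun q => ?_))
      rw [norm_mul, norm_exp_I_mul, one_mul, Complex.norm_real, Real.norm_eq_abs]
      exact habs1 q)
    ((((measurable_const.mul (Complex.measurable_ofReal.comp measurable_fst)).mul
        (hexpmeas 0)).mul hWC).aestronglyMeasurable)
    (ae_of_all _ fun q s _ => by
      rw [norm_mul, norm_mul, norm_mul, norm_exp_I_mul, Complex.norm_I, one_mul, mul_one,
        Complex.norm_real, Complex.norm_real, Real.norm_eq_abs, Real.norm_eq_abs]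
      exact habs2 q)
    hWint
    (ae_of_all _ fun q s _ => hasDerivAt_scalar q.1 (W q) s)
  have hlam_der : HasDerivAt lam (Complex.I * (m : ℂ)) 0 := by
    rw [hlam]
    have h := hlam_base.2
    have heq : (∫ q : ℝ × ℝ, (Complex.I * (q.1 : ℂ)) *
        Complex.exp (Complex.I * (q.1 : ℂ) * ((0 : ℝ) : ℂ)) * (W q : ℂ))
        = Complex.I * (m : ℂ) := by
      simp only [Complex.ofReal_zero, mul_zero, Complex.exp_zero, mul_one]
      have : (fun q : ℝ × ℝ => (Complex.I * (q.1 : ℂ)) * (W q : ℂ))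
          = fun q : ℝ × ℝ => Complex.I * ((q.1 * W q : ℝ) : ℂ) := by
        funext q; push_cast; ring
      have h2 : (∫ q : ℝ × ℝ, ((q.1 * W q : ℝ) : ℂ))
          = ((∫ q : ℝ × ℝ, q.1 * W q : ℝ) : ℂ) := integral_ofReal
      rw [this, MeasureTheory.integral_const_mul, h2, ← hm]
    rwa [heq] at h
  have hlam0 : lam 0 = 1 := by
    rw [hlam]
    simp only [Complex.ofReal_zero, mul_zero, Complex.exp_zero, one_mul]
    have h3 : (∫ q : ℝ × ℝ, ((W q : ℝ) : ℂ)) = ((∫ q : ℝ × ℝ, W q : ℝ) : ℂ) := integral_ofReal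
    rw [h3, hWnorm, Complex.ofReal_one]
  -- derivative of N at 0
  have hN_base := hasDerivAt_integral_of_dominated_loc_of_deriv_le (𝕜 := ℝ) (μ := volume)
    (F := fun s (q : ℝ × ℝ) =>
      (Complex.exp (Complex.I * (q.1 : ℂ) * (s : ℂ)) * (W q : ℂ)) • Mt H ρ q.2)
    (F' := fun s (q : ℝ × ℝ) =>
      ((Complex.I * (q.1 : ℂ)) * Complex.exp (Complex.I * (q.1 : ℂ) * (s : ℂ)) * (W q : ℂ)) •
        Mt H ρ q.2)
    (x₀ := 0) (s := Metric.ball 0 1) (bound := fun q => C * (|W q| * (1 + |q.1|))) (Metric.ball_mem_nhds 0 one_pos)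
    (Filter.Eventually.of_forall fun s =>
      (((hexpmeas s).mul hWC).aestronglyMeasurable.smul hMq))
    (key_int _ (((hexpmeas 0).mul hWC)).aestronglyMeasurable (fun q => by
      rw [norm_mul, norm_exp_I_mul, one_mul, Complex.norm_real, Real.norm_eq_abs]
      exact habs1 q))
    ((((measurable_const.mul (Complex.measurable_ofReal.comp measurable_fst)).mul
        (hexpmeas 0)).mul hWC).aestronglyMeasurable.smul hMq)
    (ae_of_all _ fun q s _ => by
      rw [norm_smul, norm_mul, norm_mul, norm_mul, norm_exp_I_mul, Complex.norm_I, one_mul,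
        mul_one, Complex.norm_real, Complex.norm_real, Real.norm_eq_abs, Real.norm_eq_abs]
      calc |q.1| * |W q| * ‖Mt H ρ q.2‖ ≤ (|W q| * (1 + |q.1|)) * C :=
            mul_le_mul (habs2 q) (hMle q.2) (norm_nonneg _) (by positivity)
        _ = C * (|W q| * (1 + |q.1|)) := mul_comm _ _)
    (hWint.const_mul C)
    (ae_of_all _ fun q s _ => (hasDerivAt_scalar q.1 (W q) s).smul_const (Mt H ρ q.2))
  -- the three basic integrals
  set A : Matrix (Fin n) (Fin n) ℂ :=
    ∫ q : ℝ × ℝ, ((q.1 * W q : ℝ) : ℂ) • Mt H ρ q.2 with hAdef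
  set B : Matrix (Fin n) (Fin n) ℂ :=
    ∫ q : ℝ × ℝ, ((W q : ℝ) : ℂ) • Mt H ρ q.2 with hBdef
  have hA_int : Integrable (fun q : ℝ × ℝ => ((q.1 * W q : ℝ) : ℂ) • Mt H ρ q.2) := by
    refine key_int _ ((Complex.measurable_ofReal.comp
      (measurable_fst.mul hWmeas)).aestronglyMeasurable) fun q => ?_
    rw [Complex.norm_real, Real.norm_eq_abs, abs_mul]
    exact habs2 q
  have hB_int : Integrable (fun q : ℝ × ℝ => ((W q : ℝ) : ℂ) • Mt H ρ q.2) := by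
    refine key_int _ (hWC.aestronglyMeasurable) fun q => ?_
    rw [Complex.norm_real, Real.norm_eq_abs]
    exact habs1 q
  have hN0 : N 0 = B := by
    rw [hN']
    simp only [Complex.ofReal_zero, mul_zero, Complex.exp_zero, one_mul]
    rfl
  have hN'0 : (∫ q : ℝ × ℝ, ((Complex.I * (q.1 : ℂ)) *
      Complex.exp (Complex.I * (q.1 : ℂ) * ((0 : ℝ) : ℂ)) * (W q : ℂ)) • Mt H ρ q.2)
      = Complex.I • A := by
    simp only [Complex.ofReal_zero, mul_zero, Complex.exp_zero, mul_one]
    have : (fun q : ℝ × ℝ => ((Complex.I * (q.1 : ℂ)) * (W q : ℂ)) • Mt H ρ q.2)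
        = fun q : ℝ × ℝ => Complex.I • (((q.1 * W q : ℝ) : ℂ) • Mt H ρ q.2) := by
      funext q
      rw [smul_smul]
      congr 1
      push_cast
      ring
    rw [this, integral_smul]
  have hN_der : HasDerivAt N (Complex.I • A) 0 := by
    have h := hN_base.2
    rw [hN'0] at h
    rw [hN']
    exact h
  -- J2 decomposition
  have hsub : (fun q : ℝ × ℝ => (((q.1 - m) * W q : ℝ) : ℂ) • Mt H ρ q.2)
      = fun q : ℝ × ℝ => ((q.1 * W q : ℝ) : ℂ) • Mt H ρ q.2
        - ((m : ℝ) : ℂ) • (((W q : ℝ) : ℂ) • Mt H ρ q.2) := by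
    funext q
    rw [smul_smul, ← sub_smul]
    congr 1
    push_cast
    ring
  have hB_int' : Integrable
      (fun q : ℝ × ℝ => ((m : ℝ) : ℂ) • (((W q : ℝ) : ℂ) • Mt H ρ q.2)) volume :=
    hB_int.smul ((m : ℝ) : ℂ)
  have hJ2c_int : Integrable (fun q : ℝ × ℝ => (((q.1 - m) * W q : ℝ) : ℂ) • Mt H ρ q.2) := by
    rw [hsub]
    exact hA_int.sub hB_int'
  have hJ2c : (∫ q : ℝ × ℝ, (((q.1 - m) * W q : ℝ) : ℂ) • Mt H ρ q.2)
      = A - ((m : ℝ) : ℂ) • B := by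
    rw [hsub, integral_sub hA_int hB_int', integral_smul]
  -- real-smul vs complex-smul versions
  have hcoe : (fun q : ℝ × ℝ => ((q.1 - m) * W q) • Mt H ρ q.2)
      = fun q : ℝ × ℝ => (((q.1 - m) * W q : ℝ) : ℂ) • Mt H ρ q.2 := by
    funext q
    rw [Complex.coe_smul]
  have hJ2R_int : Integrable (fun q : ℝ × ℝ => ((q.1 - m) * W q) • Mt H ρ q.2) := by
    rw [hcoe]; exact hJ2c_int
  have hD'' : D = Complex.I • (A - ((m : ℝ) : ℂ) • B) := by
    rw [hD', hcoe, hJ2c]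
  -- derivative of ξ
  have hxi_der : HasDerivAt ξ D 0 := by
    have hinv : HasDerivAt (fun s => (lam s)⁻¹) (-(Complex.I * (m : ℂ))) 0 := by
      have hne : lam 0 ≠ 0 := by rw [hlam0]; exact one_ne_zero
      have h := (hasDerivAt_inv hne).scomp (0 : ℝ) hlam_der
      simpa [hlam0, Function.comp_def, smul_eq_mul] using h
    have h := hinv.smul hN_der
    rw [show ((fun s => (lam s)⁻¹) • N) = ξ from hξ.symm] at h
    have heq : (lam 0)⁻¹ • (Complex.I • A) + (-(Complex.I * (m : ℂ))) • N 0
        = D := by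
      rw [hlam0, hN0, hD'', inv_one, one_smul, smul_sub, smul_smul, neg_smul,
        ← sub_eq_add_neg]
    rwa [heq] at h
  refine ⟨hxi_der, ?_⟩
  -- trace identity
  let Ltr : Matrix (Fin n) (Fin n) ℂ →ₗ[ℝ] ℂ :=
    { toFun := fun X => (WS * X).trace
      map_add' := fun X Y => by
        show (WS * (X + Y)).trace = (WS * X).trace + (WS * Y).trace
        rw [Matrix.mul_add, Matrix.trace_add]
      map_smul' := fun r X => by
        show (WS * (r • X)).trace = r • (WS * X).trace
        rw [Matrix.mul_smul, Matrix.trace_smul] }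
  let L : Matrix (Fin n) (Fin n) ℂ →L[ℝ] ℂ := LinearMap.toContinuousLinearMap Ltr
  have hLcomm : L (∫ q : ℝ × ℝ, ((q.1 - m) * W q) • Mt H ρ q.2)
      = ∫ q : ℝ × ℝ, L (((q.1 - m) * W q) • Mt H ρ q.2) :=
    (L.integral_comp_comm hJ2R_int).symm
  have hLval : ∀ q : ℝ × ℝ, L (((q.1 - m) * W q) • Mt H ρ q.2)
      = (((q.1 - m) * W q : ℝ) : ℂ) * (WS * Mt H ρ q.2).trace := by
    intro q
    show (WS * (((q.1 - m) * W q) • Mt H ρ q.2)).trace = _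
    rw [Matrix.mul_smul, Matrix.trace_smul, Complex.real_smul]
  have main : (-Complex.I) *
      (WS * (Complex.I • ∫ q : ℝ × ℝ, ((q.1 - m) * W q) • Mt H ρ q.2)).trace
      = ∫ q : ℝ × ℝ, (((q.1 - m) * W q : ℝ) : ℂ) * (WS * Mt H ρ q.2).trace := by
    rw [Matrix.mul_smul, Matrix.trace_smul, smul_eq_mul, ← mul_assoc, neg_mul,
      Complex.I_mul_I, neg_neg, one_mul]
    rw [show (WS * ∫ q : ℝ × ℝ, ((q.1 - m) * W q) • Mt H ρ q.2).trace
        = L (∫ q : ℝ × ℝ, ((q.1 - m) * W q) • Mt H ρ q.2) from rfl, hLcomm]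
    exact integral_congr_ae (ae_of_all _ fun q => hLval q)
  rw [hD']
  simp only [Mt] at main
  exact main
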